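/- A conformally flat para-Sasakian manifold of dimension 2n+1 ≥ 5 has constant sectional curvature −1, i.e. R(X,Y)Z = −(g(Y,Z)X − g(X,Z)Y). -/

import Mathlib

/-- An abstract (algebraic) model of an almost paracontact metric manifold:
`V` plays the role of the ℝ-module of vector fields on a (2n+1)-dimensional
manifold `M`, equipped with the Lie bracket of vector fields, the Levi-Civita
connection `nabla`, the (pointwise evaluated) pseudo-Riemannian metric `g` and
the structure tensors `(phi, xi, eta)` subject to the defining identities of an
almost paracontact metric structure. -/
structure APCM (V : Type*) [AddCommGroup V] [Module ℝ V] where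
  n : ℕ
  phi : V →ₗ[ℝ] V
  xi : V
  eta : V →ₗ[ℝ] ℝ
  g : V →ₗ[ℝ] V →ₗ[ℝ] ℝ
  bracket : V → V → V
  nabla : V → V → V
  g_symm : ∀ X Y, g X Y = g Y X
  g_nondeg : ∀ X, (∀ Y, g X Y = 0) → X = 0
  phi_sq : ∀ X, phi (phi X) = X - eta X • xi
  eta_xi : eta xi = 1
  phi_xi : phi xi = 0
  eta_phi : ∀ X, eta (phi X) = 0
  compat : ∀ X Y, g (phi X) (phi Y) = - g X Y + eta X * eta Y
  eta_g : ∀ X, eta X = g X xi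
  bracket_skew : ∀ X Y, bracket X Y = - bracket Y X
  nabla_add_left : ∀ X Y Z, nabla (X + Y) Z = nabla X Z + nabla Y Z
  nabla_add_right : ∀ X Y Z, nabla X (Y + Z) = nabla X Y + nabla X Z
  nabla_smul_left : ∀ (a : ℝ) (X Y : V), nabla (a • X) Y = a • nabla X Y
  nabla_smul_right : ∀ (a : ℝ) (X Y : V), nabla X (a • Y) = a • nabla X Y
  torsion_free : ∀ X Y, nabla X Y - nabla Y X = bracket X Y
  /-- `dη(U,V) = −(1/2)η([U,V])` for `U, V` in the paracontact distribution,
  i.e. `(∇_U η)(V) − (∇_V η)(U) = −η([U,V])`. -/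
  deta_bracket : ∀ X Y, eta X = 0 → eta Y = 0 →
    g (nabla X xi) Y - g (nabla Y xi) X = - eta (bracket X Y)

noncomputable section
namespace APCM

variable {V : Type*} [AddCommGroup V] [Module ℝ V] (P : APCM V)

/-- `(∇_X η)(Y) = g(∇_X ξ, Y)`. -/
def nablaEta (X Y : V) : ℝ := P.g (P.nabla X P.xi) Y

/-- `(∇_X φ)Y = ∇_X(φY) − φ(∇_X Y)`. -/
def nablaPhi (X Y : V) : V := P.nabla X (P.phi Y) - P.phi (P.nabla X Y)

/-- `dη(X,Y) = (1/2)((∇_X η)(Y) − (∇_Y η)(X))`. -/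
def deta (X Y : V) : ℝ := (1/2) * (P.nablaEta X Y - P.nablaEta Y X)

/-- Membership in the paracontact distribution `D = Ker η`. -/
def inD (X : V) : Prop := P.eta X = 0

/-- Membership in `D⁺`, the (+1)-eigendistribution of `φ|_D`. -/
def inDplus (X : V) : Prop := P.eta X = 0 ∧ P.phi X = X

/-- Membership in `D⁻`, the (−1)-eigendistribution of `φ|_D`. -/
def inDminus (X : V) : Prop := P.eta X = 0 ∧ P.phi X = - X

/-- The structure is para-CR iff both eigendistributions `D⁺`, `D⁻` are involutive. -/
def IsParaCR : Prop :=
  (∀ X Y, P.inDplus X → P.inDplus Y → P.inDplus (P.bracket X Y)) ∧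
  (∀ X Y, P.inDminus X → P.inDminus Y → P.inDminus (P.bracket X Y))

/-- Paracontact metric: `Φ = dη` where `Φ(X,Y) = g(X, φY)`. -/
def IsParacontact : Prop := ∀ X Y, P.g X (P.phi Y) = P.deta X Y

/-- `h = (1/2) L_ξ φ`, i.e. `hX = (1/2)([ξ, φX] − φ[ξ, X])`. -/
def hten (X : V) : V := (1/2 : ℝ) • (P.bracket P.xi (P.phi X) - P.phi (P.bracket P.xi X))

/-- `(∇_X h)Y = ∇_X(hY) − h(∇_X Y)`. -/
def nablaH (X Y : V) : V := P.nabla X (P.hten Y) - P.hten (P.nabla X Y)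

/-- The Riemann curvature operator `R(W,X)Y`. -/
def R (W X Y : V) : V :=
  P.nabla W (P.nabla X Y) - P.nabla X (P.nabla W Y) - P.nabla (P.bracket W X) Y

/-- Normality: `φ(∇_X φ)Y − (∇_{φX} φ)Y + ((∇_X η)Y)ξ = 0` for all `X, Y`. -/
def IsNormal : Prop :=
  ∀ X Y, P.phi (P.nablaPhi X Y) - P.nablaPhi (P.phi X) Y + P.nablaEta X Y • P.xi = 0

/-- Para-Sasakian: `(∇_X φ)Y = −g(X,Y)ξ + η(Y)X`. -/
def IsParaSasakian : Prop :=
  ∀ X Y, P.nablaPhi X Y = -(P.g X Y) • P.xi + P.eta Y • X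

end APCM
end


lemma trace_smulRight' {V : Type*} [AddCommGroup V] [Module ℝ V] [FiniteDimensional ℝ V]
    (f : V →ₗ[ℝ] ℝ) (y : V) :
    LinearMap.trace ℝ V (f.smulRight y) = f y := by
  have h : f.smulRight y = (LinearMap.toSpanSingleton ℝ V y).comp f := by
    ext x; simp [LinearMap.toSpanSingleton_apply]
  rw [h, LinearMap.trace_comp_comm']
  have h2 : f.comp (LinearMap.toSpanSingleton ℝ V y) = (f y) • LinearMap.id := by
    ext; simp [LinearMap.toSpanSingleton_apply, mul_comm]
  rw [h2, map_smul, LinearMap.trace_id]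
  simp

lemma trace_skew_zero {V : Type*} [AddCommGroup V] [Module ℝ V] [FiniteDimensional ℝ V]
    (g : V →ₗ[ℝ] Module.Dual ℝ V) (hnd : ∀ X, (∀ Y, g X Y = 0) → X = 0)
    (φ : V →ₗ[ℝ] V) (hskew : ∀ X Y, g (φ X) Y = - g X (φ Y)) :
    LinearMap.trace ℝ V φ = 0 := by
  have hinj : Function.Injective g := by
    intro a b hab
    have h0 : ∀ Y, g (a - b) Y = 0 := fun Y => by simp [map_sub, hab]
    exact sub_eq_zero.mp (hnd _ h0)
  have hfr : Module.finrank ℝ V = Module.finrank ℝ (Module.Dual ℝ V) :=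
    Subspace.dual_finrank_eq.symm
  set e := g.linearEquivOfInjective hinj hfr with he
  have hconj : e.conj φ = - Module.Dual.transpose (R := ℝ) φ := by
    apply LinearMap.ext; intro ψ
    obtain ⟨X, rfl⟩ := e.surjective ψ
    apply LinearMap.ext; intro Y
    have heX : ∀ Z, e Z = g Z := fun Z => rfl
    have hsymm : e.symm (g X) = X := by rw [← heX]; exact e.symm_apply_apply X
    simp [LinearEquiv.conj_apply, heX, hsymm, Module.Dual.transpose_apply, hskew]
  have h1 := LinearMap.trace_conj' φ e
  rw [hconj] at h1
  have h2 : (LinearMap.trace ℝ (Module.Dual ℝ V)) (-(Module.Dual.transpose (R := ℝ) φ))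
      = - (LinearMap.trace ℝ (Module.Dual ℝ V)) (Module.Dual.transpose (R := ℝ) φ) :=
    by rw [← neg_one_smul ℝ (Module.Dual.transpose (R := ℝ) φ), map_smul]; simp
  rw [h2, LinearMap.trace_transpose'] at h1
  linarith

set_option maxHeartbeats 2000000 in
/-- A conformally flat para-Sasakian manifold of dimension
`2n+1 ≥ 5` has constant sectional curvature `−1`:
`R(X,Y)Z = −(g(Y,Z)X − g(X,Z)Y)`. -/
theorem stmt15 {V : Type*} [AddCommGroup V] [Module ℝ V] [FiniteDimensional ℝ V]
    (P : APCM V) (hdim : Module.finrank ℝ V = 2 * P.n + 1) (hn : 2 ≤ P.n)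
    (hsas : P.IsParaSasakian)
    (hnxi : ∀ X, P.nabla X P.xi = -(P.phi X))
    (hRxi : ∀ X Y, P.R X Y P.xi = P.eta X • Y - P.eta Y • X)
    -- the Ricci operator, defined by a trace of the curvature
    (Ric : V →ₗ[ℝ] V) (Rfirst : V → V → V →ₗ[ℝ] V)
    (hRfirst : ∀ X Y Z, Rfirst Y Z X = P.R X Y Z)
    (hRic : ∀ Y Z, P.g (Ric Y) Z = LinearMap.trace ℝ V (Rfirst Y Z))
    (hRicxi : ∀ Y, P.g (Ric P.xi) Y = -(2 * (P.n : ℝ)) * P.eta Y)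
    -- the *-Ricci operator and the scalar and *-scalar curvatures
    (RicStar : V →ₗ[ℝ] V) (RfirstStar : V → V → V →ₗ[ℝ] V)
    (hRfirstStar : ∀ X Y Z, RfirstStar Y Z X = -(P.phi (P.R X Y (P.phi Z))))
    (hRicStar : ∀ Y Z, P.g (RicStar Y) Z = LinearMap.trace ℝ V (RfirstStar Y Z))
    (r rstar : ℝ)
    (hr : r = LinearMap.trace ℝ V Ric)
    (hrstar : rstar = LinearMap.trace ℝ V RicStar)
    (hsum : r + rstar + 4 * (P.n : ℝ) ^ 2 = 0)
    -- conformal flatness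
    (hcf : ∀ X Y Z, P.R X Y Z
        = (1 / (2 * (P.n : ℝ) - 1))
            • (P.g Y Z • Ric X + P.g (Ric Y) Z • X
                - P.g X Z • Ric Y - P.g (Ric X) Z • Y)
          - (r / (2 * (P.n : ℝ) * (2 * (P.n : ℝ) - 1)))
            • (P.g Y Z • X - P.g X Z • Y)) :
    ∀ X Y Z, P.R X Y Z = -(P.g Y Z • X - P.g X Z • Y) := by
  have hN2 : (2:ℝ) ≤ (P.n : ℝ) := by exact_mod_cast hn
  set N : ℝ := (P.n : ℝ) with hN
  have hN0 : N ≠ 0 := by intro h; rw [h] at hN2; norm_num at hN2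
  have h2N1 : 2*N - 1 ≠ 0 := by intro h; nlinarith
  have hN1 : N - 1 ≠ 0 := by intro h; nlinarith
  -- basic metric facts
  have hgxiY : ∀ W, P.g P.xi W = P.eta W := fun W => by rw [P.g_symm, ← P.eta_g]
  have hgYxi : ∀ W, P.g W P.xi = P.eta W := fun W => (P.eta_g W).symm
  have hgxixi : P.g P.xi P.xi = 1 := by rw [hgYxi, P.eta_xi]
  have hfr : (Module.finrank ℝ V : ℝ) = 2*N + 1 := by rw [hdim]; push_cast; ring
  -- g(Ric X, ξ)
  have hRfXxi : ∀ X, Rfirst X P.xi = (P.eta).smulRight X - (P.eta X) • LinearMap.id := by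
    intro X; apply LinearMap.ext; intro W
    simp [hRfirst, hRxi]
  have hcX : ∀ X, P.g (Ric X) P.xi = -(2*N) * P.eta X := by
    intro X
    rw [hRic, hRfXxi, map_sub, map_smul, trace_smulRight', LinearMap.trace_id, hfr]
    simp [smul_eq_mul]; ring
  have hetaRic : ∀ X, P.eta (Ric X) = -(2*N) * P.eta X := fun X => by
    rw [P.eta_g, hcX]
  -- scalar Ricci formula
  have hRicS : ∀ X W, P.g (Ric X) W =
      (1 + r/(2*N)) * P.g X W + (-(r/(2*N)) - 2*N - 1) * (P.eta X * P.eta W) := by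
    intro X W
    have E := hcf X P.xi P.xi
    rw [hRxi] at E
    have E2 := congrArg (fun v => P.g v W) E
    simp only [map_add, map_sub, map_smul, LinearMap.add_apply, LinearMap.sub_apply,
      LinearMap.smul_apply, smul_eq_mul, hgxixi, hgYxi, hgxiY, hRicxi, hcX, hetaRic,
      P.eta_xi] at E2
    field_simp at E2
    have h2N0 : (2*N*(2*N-1)) ≠ 0 := mul_ne_zero (by intro h; apply hN0; linarith) h2N1
    have hscaled : 2*N*(2*N-1) * P.g (Ric X) W
        = (2*N-1)*((2*N + r) * P.g X W - (r + 4*N^2 + 2*N) * (P.eta X * P.eta W)) := by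
      linear_combination (-(2*N-1)) * E2
    apply mul_left_cancel₀ h2N0
    rw [hscaled]; field_simp; ring
  -- vector Ricci formula
  have hRicV : ∀ X, Ric X = (1 + r/(2*N)) • X + ((-(r/(2*N)) - 2*N - 1) * P.eta X) • P.xi := by
    intro X
    apply sub_eq_zero.mp
    apply P.g_nondeg
    intro W
    simp only [map_sub, map_add, map_smul, LinearMap.sub_apply, LinearMap.add_apply,
      LinearMap.smul_apply, smul_eq_mul, hRicS, hgxiY]
    ring
  -- phi is skew-symmetric for g
  have hskew : ∀ X Y, P.g (P.phi X) Y = - P.g X (P.phi Y) := by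
    intro X Y
    have h1 := P.compat X (P.phi Y)
    rw [P.phi_sq, P.eta_phi] at h1
    simp only [map_sub, map_smul, smul_eq_mul, mul_zero, add_zero] at h1
    rw [hgYxi, P.eta_phi] at h1
    linarith
  have htphi : LinearMap.trace ℝ V P.phi = 0 :=
    trace_skew_zero P.g P.g_nondeg P.phi hskew
  set C : ℝ := 2*(1/(2*N-1))*(1 + r/(2*N)) - r/(2*N*(2*N-1)) with hC
  have hRfS : ∀ Y Z, RfirstStar Y Z
      = (-C * P.g Y (P.phi Z)) • P.phi
        + (P.g.flip (P.phi Z)).smulRight (C • P.phi Y) := by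
    intro Y Z
    apply LinearMap.ext; intro X
    rw [hRfirstStar, hcf]
    simp only [hRicV, map_add, map_sub, map_smul, LinearMap.add_apply, LinearMap.sub_apply,
      LinearMap.smul_apply, LinearMap.smulRight_apply, LinearMap.flip_apply, smul_eq_mul,
      P.phi_xi, P.eta_phi, hgxiY, smul_zero, mul_zero, add_zero, zero_smul]
    match_scalars <;> (rw [hC]; field_simp; ring)
  have hRicStarS : ∀ Y Z, P.g (RicStar Y) Z = C * (- P.g Y Z + P.eta Y * P.eta Z) := by
    intro Y Z
    rw [hRicStar, hRfS, map_add, map_smul, trace_smulRight', htphi]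
    simp only [smul_eq_mul, mul_zero, zero_add, LinearMap.flip_apply, map_smul]
    rw [P.compat]
  have hRicStarV : RicStar = C • ((P.eta).smulRight P.xi - LinearMap.id) := by
    apply LinearMap.ext; intro Y
    apply sub_eq_zero.mp
    apply P.g_nondeg
    intro W
    simp only [map_sub, map_add, map_smul, LinearMap.sub_apply, LinearMap.add_apply,
      LinearMap.smul_apply, LinearMap.smulRight_apply, LinearMap.id_apply, smul_eq_mul,
      hRicStarS, hgxiY]
    ring
  have hrstar' : rstar = -2*N*C := by
    rw [hrstar, hRicStarV, map_smul, map_sub, trace_smulRight', LinearMap.trace_id,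
      P.eta_xi, hfr]
    simp only [smul_eq_mul]
    ring
  have hrval : r = -2*N*(2*N+1) := by
    rw [hrstar', hC] at hsum
    have key2 : (r + 2*N*(2*N+1)) * ((N-1) * (4*N^2*(2*N-1))) = 0 := by
      field_simp at hsum
      linear_combination (2*N^2*(2*N-1)) * hsum
    have h4 : (N-1) * (4*N^2*(2*N-1)) ≠ 0 :=
      mul_ne_zero hN1 (mul_ne_zero (by positivity) h2N1)
    rcases mul_eq_zero.mp key2 with h | h
    · linarith
    · exact absurd h h4
  intro X Y Z
  rw [hcf X Y Z]
  simp only [hRicV, hRicS, map_add, map_smul, LinearMap.add_apply, LinearMap.smul_apply,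
    smul_eq_mul, hgxiY]
  rw [hrval]
  match_scalars <;> (field_simp <;> ring)
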